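/- Quadratic convergence of Newton's iteration for power series systems: assume every H_i has zero constant coefficient and the Jacobian matrix at the origin J₀ is nilpotent, and let S be the unique solution of Y = H(z,Y) whose components have zero constant coefficients. Let k ≥ 0 and let y be a vector of power series in z with zero constant coefficients such that y_i ≡ S_i mod z^{k+1} for all i. Then the m×m matrix Id − (∂H_i/∂y_j(z,y))_{i,j} of power series in z is invertible over the matrix ring of power series, and the Newton iterate N(y) := y + (Id − (∂H_i/∂y_j(z,y))_{i,j})^{-1}·(H(z,y) − y) satisfies N(y)_i ≡ S_i mod z^{2k+2} for all i. -/

import Mathlib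

/-- Substitution of a family `s` of one-variable formal power series (each intended to have
zero constant coefficient) into a multivariate formal power series `H` in `k` variables:
the coefficient of `z^n` in `H(s)` is the (finite) sum over all monomials `d` of the
coefficient of `d` in `H` times the coefficient of `z^n` in `∏ j, (s j) ^ (d j)`.
When every `s j` has zero constant coefficient, only monomials `d` with
`∑ j, d j ≤ n` (in particular `d ≤ (n, …, n)`) can contribute, so this is the usual
well-defined substitution. -/
noncomputable def mvSubst {R : Type*} [CommSemiring R] {k : ℕ}
    (H : MvPowerSeries (Fin k) R) (s : Fin k → PowerSeries R) : PowerSeries R :=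
  PowerSeries.mk fun n =>
    ∑ d ∈ Finset.Iic (Finsupp.equivFunOnFinite.symm fun _ : Fin k => n),
      MvPowerSeries.coeff d H * PowerSeries.coeff n (∏ j, (s j) ^ (d j))

/-- The formal partial derivative of a multivariate formal power series with respect to the
variable `j`: the coefficient of a monomial `d` is `(d j + 1)` times the coefficient of the
monomial `d + y_j` in `H`. -/
noncomputable def mvPderiv {R : Type*} [CommSemiring R] {k : ℕ} (j : Fin k)
    (H : MvPowerSeries (Fin k) R) : MvPowerSeries (Fin k) R :=
  fun d => ((d j + 1 : ℕ) : R) * MvPowerSeries.coeff (d + Finsupp.single j 1) H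


namespace NewtonAux

open PowerSeries Finset

variable {R : Type*} [CommRing R]

/-- binomial-type identity: second-order Taylor remainder for powers is divisible by `(s-t)^2` -/
lemma sq_dvd_pow_taylor (s t : PowerSeries R) (e : ℕ) :
    (s - t) ^ 2 ∣ s ^ (e+1) - t ^ (e+1) - ((e+1 : ℕ) : PowerSeries R) * (s - t) * t ^ e := by
  induction e with
  | zero => simp
  | succ e ih =>
    have key : s ^ (e+2) - t ^ (e+2) - ((e+2 : ℕ) : PowerSeries R) * (s - t) * t ^ (e+1)
        = s * (s ^ (e+1) - t ^ (e+1) - ((e+1 : ℕ) : PowerSeries R) * (s - t) * t ^ e)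
          + ((e+1 : ℕ) : PowerSeries R) * (s - t) ^ 2 * t ^ e := by
      push_cast; ring
    rw [key]
    exact dvd_add (ih.mul_left s) ((dvd_rfl.mul_left _).mul_right _)

lemma taylor_pow {K : ℕ} {s t : PowerSeries R} (h : (X : R⟦X⟧) ^ K ∣ s - t) (e : ℕ) :
    (X : R⟦X⟧) ^ (2*K) ∣ s ^ e - t ^ e - ((e : ℕ) : PowerSeries R) * (s - t) * t ^ (e-1) := by
  have h2 : (X : R⟦X⟧) ^ (2*K) ∣ (s - t) ^ 2 := by
    rw [two_mul, pow_add, sq]; exact mul_dvd_mul h h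
  cases e with
  | zero => simp
  | succ e => exact h2.trans (by simpa using sq_dvd_pow_taylor s t e)

lemma dvd_prod_sub_prod {ι : Type*} [DecidableEq ι] (a : PowerSeries R) (s t : ι → PowerSeries R)
    (h : ∀ j, a ∣ s j - t j) (d : ι → ℕ) (u : Finset ι) :
    a ∣ ∏ j ∈ u, s j ^ d j - ∏ j ∈ u, t j ^ d j := by
  induction u using Finset.induction_on with
  | empty => simp
  | insert _ _ ha ih =>
    rename_i b u'
    rw [Finset.prod_insert ha, Finset.prod_insert ha]
    have key : s b ^ d b * ∏ j ∈ u', s j ^ d j - t b ^ d b * ∏ j ∈ u', t j ^ d j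
        = s b ^ d b * (∏ j ∈ u', s j ^ d j - ∏ j ∈ u', t j ^ d j)
          + (s b ^ d b - t b ^ d b) * ∏ j ∈ u', t j ^ d j := by ring
    rw [key]
    exact dvd_add (ih.mul_left _) (((h b).trans (sub_dvd_pow_sub_pow _ _ _)).mul_right _)

/-- per-monomial second-order Taylor expansion -/
lemma taylor_prod {ι : Type*} [DecidableEq ι] {K : ℕ} (s t : ι → PowerSeries R)
    (h : ∀ j, (X : R⟦X⟧) ^ K ∣ s j - t j) (d : ι → ℕ) (u : Finset ι) :
    (X : R⟦X⟧) ^ (2*K) ∣ ∏ j ∈ u, s j ^ d j - ∏ j ∈ u, t j ^ d j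
      - ∑ j ∈ u, ((d j : ℕ) : PowerSeries R) * (s j - t j) *
          (t j ^ (d j - 1) * ∏ l ∈ u.erase j, t l ^ d l) := by
  induction u using Finset.induction_on with
  | empty => simp
  | insert _ _ ha ih =>
    rename_i b u'
    rw [Finset.prod_insert ha, Finset.prod_insert ha, Finset.sum_insert ha,
      Finset.erase_insert ha]
    have hsum : ∑ j ∈ u', ((d j : ℕ) : PowerSeries R) * (s j - t j) *
          (t j ^ (d j - 1) * ∏ l ∈ (insert b u').erase j, t l ^ d l)
        = t b ^ d b * ∑ j ∈ u', ((d j : ℕ) : PowerSeries R) * (s j - t j) *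
          (t j ^ (d j - 1) * ∏ l ∈ u'.erase j, t l ^ d l) := by
      rw [Finset.mul_sum]
      refine Finset.sum_congr rfl fun j hj => ?_
      have hbj : j ≠ b := fun hbe => ha (hbe ▸ hj)
      rw [Finset.erase_insert_of_ne hbj.symm, Finset.prod_insert (fun hbe => ha (Finset.mem_of_mem_erase hbe))]
      ring
    rw [hsum]
    have key : s b ^ d b * ∏ j ∈ u', s j ^ d j - t b ^ d b * ∏ j ∈ u', t j ^ d j
        - (((d b : ℕ) : PowerSeries R) * (s b - t b) * (t b ^ (d b - 1) * ∏ l ∈ u', t l ^ d l)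
           + t b ^ d b * ∑ j ∈ u', ((d j : ℕ) : PowerSeries R) * (s j - t j) *
              (t j ^ (d j - 1) * ∏ l ∈ u'.erase j, t l ^ d l))
        = t b ^ d b * (∏ j ∈ u', s j ^ d j - ∏ j ∈ u', t j ^ d j
            - ∑ j ∈ u', ((d j : ℕ) : PowerSeries R) * (s j - t j) *
              (t j ^ (d j - 1) * ∏ l ∈ u'.erase j, t l ^ d l))
          + (s b ^ d b - t b ^ d b - ((d b : ℕ) : PowerSeries R) * (s b - t b) * t b ^ (d b - 1))
              * ∏ j ∈ u', s j ^ d j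
          + ((d b : ℕ) : PowerSeries R) * (s b - t b) * t b ^ (d b - 1) *
              (∏ j ∈ u', s j ^ d j - ∏ j ∈ u', t j ^ d j) := by ring
    rw [key]
    refine dvd_add (dvd_add (ih.mul_left _) ((taylor_pow (h b) (d b)).mul_right _)) ?_
    have h1 : (X : R⟦X⟧) ^ K ∣ ((d b : ℕ) : PowerSeries R) * (s b - t b) * t b ^ (d b - 1) :=
      ((h b).mul_left _).mul_right _
    have h2 : (X : R⟦X⟧) ^ K ∣ ∏ j ∈ u', s j ^ d j - ∏ j ∈ u', t j ^ d j :=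
      dvd_prod_sub_prod _ s t h d u'
    have : (X : R⟦X⟧) ^ (2*K) = (X : R⟦X⟧) ^ K * (X : R⟦X⟧) ^ K := by rw [two_mul, pow_add]
    rw [this]
    exact mul_dvd_mul h1 h2


/-- the constant-in-n monomial bound -/
noncomputable def nbar (κ n : ℕ) : Fin κ →₀ ℕ := Finsupp.equivFunOnFinite.symm fun _ : Fin κ => n

@[simp] lemma nbar_apply (κ n : ℕ) (l : Fin κ) : nbar κ n l = n := rfl

lemma coeff_prod_eq_zero {κ : ℕ} (t : Fin κ → PowerSeries R)
    (ht : ∀ l, constantCoeff (t l) = 0) {d : Fin κ → ℕ} {p : ℕ} {l : Fin κ} (h : p < d l) :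
    PowerSeries.coeff p (∏ j, t j ^ d j) = 0 := by
  have h1 : (X : R⟦X⟧) ^ (d l) ∣ ∏ j, t j ^ d j :=
    dvd_trans (pow_dvd_pow_of_dvd (X_dvd_iff.mpr (ht l)) _)
      (Finset.dvd_prod_of_mem _ (Finset.mem_univ l))
  exact X_pow_dvd_iff.mp h1 p h

lemma coeff_mvSubst {κ : ℕ} (G : MvPowerSeries (Fin κ) R) (t : Fin κ → PowerSeries R)
    (ht : ∀ l, constantCoeff (t l) = 0) {p n : ℕ} (h : p ≤ n) :
    PowerSeries.coeff p (mvSubst G t) =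
      ∑ d ∈ Finset.Iic (nbar κ n),
        MvPowerSeries.coeff d G * PowerSeries.coeff p (∏ j, t j ^ d j) := by
  rw [mvSubst, PowerSeries.coeff_mk]
  apply Finset.sum_subset
  · intro d hd
    simp only [Finset.mem_Iic, Finsupp.le_def] at *
    intro a
    exact le_trans (hd a) h
  · intro d hd hnd
    have hex : ∃ l, p < d l := by
      by_contra hc
      push_neg at hc
      exact hnd (by simp only [Finset.mem_Iic, Finsupp.le_def]; exact fun a => by simpa using hc a)
    obtain ⟨l, hl⟩ := hex
    rw [coeff_prod_eq_zero t ht hl, mul_zero]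

lemma constantCoeff_mvSubst {κ : ℕ} (G : MvPowerSeries (Fin κ) R) (t : Fin κ → PowerSeries R) :
    constantCoeff (mvSubst G t) = MvPowerSeries.coeff 0 G := by
  have h0 : (Finsupp.equivFunOnFinite.symm fun _ : Fin κ => 0) = (0 : Fin κ →₀ ℕ) := by
    ext a; simp
  rw [← PowerSeries.coeff_zero_eq_constantCoeff_apply, mvSubst, PowerSeries.coeff_mk, h0]
  rw [show (Finset.Iic (0 : Fin κ →₀ ℕ)) = {0} from by ext d; simp [Finset.mem_Iic, le_zero_iff]]
  simp


lemma key_deriv {κ : ℕ} (G : MvPowerSeries (Fin κ) R) (t : Fin κ → PowerSeries R)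
    (ht : ∀ l, constantCoeff (t l) = 0) (δ : PowerSeries R) (hδ : constantCoeff δ = 0)
    (j : Fin κ) (n : ℕ) :
    PowerSeries.coeff n (mvSubst (mvPderiv j G) t * δ) =
      ∑ d ∈ Finset.Iic (nbar κ n), MvPowerSeries.coeff d G *
        PowerSeries.coeff n (((d j : ℕ) : PowerSeries R) * δ *
          (t j ^ (d j - 1) * ∏ l ∈ Finset.univ.erase j, t l ^ d l)) := by
  classical
  set f : (Fin κ →₀ ℕ) → R := fun d' => ((d' j : ℕ) : R) * (MvPowerSeries.coeff d' G *
      PowerSeries.coeff n (t j ^ (d' j - 1) * (∏ l ∈ Finset.univ.erase j, t l ^ d' l) * δ))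
    with hf
  have step1 : PowerSeries.coeff n (mvSubst (mvPderiv j G) t * δ)
      = ∑ d ∈ Finset.Iic (nbar κ n), MvPowerSeries.coeff d (mvPderiv j G) *
          PowerSeries.coeff n ((∏ l, t l ^ d l) * δ) := by
    rw [PowerSeries.coeff_mul]
    have h1 : ∀ pq ∈ antidiagonal n,
        PowerSeries.coeff pq.1 (mvSubst (mvPderiv j G) t) * PowerSeries.coeff pq.2 δ
        = ∑ d ∈ Finset.Iic (nbar κ n), MvPowerSeries.coeff d (mvPderiv j G) *
            (PowerSeries.coeff pq.1 (∏ l, t l ^ d l) * PowerSeries.coeff pq.2 δ) := by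
      intro pq hpq
      rw [coeff_mvSubst (mvPderiv j G) t ht
        (show pq.1 ≤ n by rw [← Finset.HasAntidiagonal.mem_antidiagonal.mp hpq]; exact Nat.le_add_right _ _),
        Finset.sum_mul]
      exact Finset.sum_congr rfl fun d _ => by ring
    rw [Finset.sum_congr rfl h1, Finset.sum_comm]
    exact Finset.sum_congr rfl fun d _ => by rw [← Finset.mul_sum, PowerSeries.coeff_mul]
  have step2 : ∀ d ∈ Finset.Iic (nbar κ n),
      MvPowerSeries.coeff d (mvPderiv j G) * PowerSeries.coeff n ((∏ l, t l ^ d l) * δ)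
      = f (d + Finsupp.single j 1) := by
    intro d _
    have hc : MvPowerSeries.coeff d (mvPderiv j G)
        = ((d j + 1 : ℕ) : R) * MvPowerSeries.coeff (d + Finsupp.single j 1) G := rfl
    have hprod : (∏ l, t l ^ d l) = t j ^ d j * ∏ l ∈ Finset.univ.erase j, t l ^ d l :=
      (Finset.mul_prod_erase Finset.univ _ (Finset.mem_univ j)).symm
    have hj1 : (d + Finsupp.single j 1 : Fin κ →₀ ℕ) j = d j + 1 := by
      simp [Finsupp.add_apply]
    have hprod2 : (∏ l ∈ Finset.univ.erase j, t l ^ (d + Finsupp.single j 1 : Fin κ →₀ ℕ) l)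
        = ∏ l ∈ Finset.univ.erase j, t l ^ d l := by
      refine Finset.prod_congr rfl fun l hl => ?_
      have hl2 : (d + Finsupp.single j 1 : Fin κ →₀ ℕ) l = d l := by
        simp [Finsupp.add_apply, Finsupp.single_eq_of_ne' (Ne.symm (Finset.mem_erase.mp hl).1)]
      rw [hl2]
    rw [hc, hf]
    simp only [hj1, hprod2, Nat.add_sub_cancel, hprod]
    ring
  rw [step1, Finset.sum_congr rfl step2]
  have himg : ∑ d ∈ Finset.Iic (nbar κ n), f (d + Finsupp.single j 1)
      = ∑ d' ∈ Finset.Iic (nbar κ n + Finsupp.single j 1), f d' := by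
    rw [← Finset.sum_image (g := fun d => d + Finsupp.single j 1) (f := f)
      (fun a _ b _ h => by exact add_left_injective _ h)]
    apply Finset.sum_subset
    · intro d' hd'
      rw [Finset.mem_image] at hd'
      obtain ⟨d, hd, rfl⟩ := hd'
      rw [Finset.mem_Iic] at hd ⊢
      exact add_le_add_left hd _
    · intro d' hd' hnd'
      have h0 : d' j = 0 := by
        by_contra h0
        apply hnd'
        rw [Finset.mem_image]
        have hle : Finsupp.single j 1 ≤ d' :=
          Finsupp.single_le_iff.mpr (Nat.one_le_iff_ne_zero.mpr h0)
        refine ⟨d' - Finsupp.single j 1, ?_, tsub_add_cancel_of_le hle⟩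
        rw [Finset.mem_Iic] at hd' ⊢
        exact tsub_le_iff_right.mpr hd'
      rw [hf]
      simp [h0]
  have hsub : ∑ d' ∈ Finset.Iic (nbar κ n), f d'
      = ∑ d' ∈ Finset.Iic (nbar κ n + Finsupp.single j 1), f d' := by
    apply Finset.sum_subset
    · intro d hd
      rw [Finset.mem_Iic] at hd ⊢
      exact le_trans hd le_self_add
    · intro d' hd' hnd'
      rw [Finset.mem_Iic] at hd' hnd'
      have hjn : n + 1 ≤ d' j := by
        by_contra hc
        apply hnd'
        rw [Finsupp.le_def]
        intro l
        rcases eq_or_ne l j with rfl | hlj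
        · simp only [nbar_apply]; omega
        · have := (Finsupp.le_def.mp hd') l
          simpa [Finsupp.add_apply, Finsupp.single_eq_of_ne' (Ne.symm hlj)] using this
      have hdvd : (X : PowerSeries R) ^ (n + 1) ∣
          t j ^ (d' j - 1) * (∏ l ∈ Finset.univ.erase j, t l ^ d' l) * δ := by
        rw [pow_succ]
        refine mul_dvd_mul ?_ (X_dvd_iff.mpr hδ)
        refine Dvd.dvd.mul_right ?_ _
        calc (X : PowerSeries R) ^ n ∣ (X : PowerSeries R) ^ (d' j - 1) :=
              pow_dvd_pow _ (by omega)
          _ ∣ t j ^ (d' j - 1) := pow_dvd_pow_of_dvd (X_dvd_iff.mpr (ht j)) _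
      rw [hf]
      simp [X_pow_dvd_iff.mp hdvd n (Nat.lt_succ_self n)]
  rw [himg, ← hsub]
  refine Finset.sum_congr rfl fun d' _ => ?_
  rw [hf]
  have : ((d' j : ℕ) : PowerSeries R) * δ *
        (t j ^ (d' j - 1) * ∏ l ∈ Finset.univ.erase j, t l ^ d' l)
      = PowerSeries.C ((d' j : ℕ) : R) *
        (t j ^ (d' j - 1) * (∏ l ∈ Finset.univ.erase j, t l ^ d' l) * δ) := by
    rw [map_natCast PowerSeries.C]
    ring
  rw [this, PowerSeries.coeff_C_mul]
  ring


lemma taylor_main {κ : ℕ} (G : MvPowerSeries (Fin κ) R) {K : ℕ}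
    (s t : Fin κ → PowerSeries R)
    (hs : ∀ l, constantCoeff (s l) = 0) (ht : ∀ l, constantCoeff (t l) = 0)
    (hst : ∀ j, (X : PowerSeries R) ^ K ∣ s j - t j) :
    (X : PowerSeries R) ^ (2*K) ∣ mvSubst G s - mvSubst G t
      - ∑ j, mvSubst (mvPderiv j G) t * (s j - t j) := by
  classical
  rw [X_pow_dvd_iff]
  intro n hn
  have hδ0 : ∀ j, constantCoeff (s j - t j) = 0 := by
    intro j; rw [map_sub, hs j, ht j, sub_zero]
  simp only [map_sub, map_sum]
  rw [coeff_mvSubst G s hs (le_refl n), coeff_mvSubst G t ht (le_refl n),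
    Finset.sum_congr rfl (fun j (_ : j ∈ Finset.univ) =>
      key_deriv G t ht (s j - t j) (hδ0 j) j n),
    Finset.sum_comm, ← Finset.sum_sub_distrib, ← Finset.sum_sub_distrib]
  apply Finset.sum_eq_zero
  intro d _
  rw [← Finset.mul_sum, ← mul_sub, ← mul_sub]
  have hdvd := taylor_prod s t hst (fun l => d l) Finset.univ
  have h0 : PowerSeries.coeff n (∏ j, s j ^ d j - ∏ j, t j ^ d j
      - ∑ j, ((d j : ℕ) : PowerSeries R) * (s j - t j) *
          (t j ^ (d j - 1) * ∏ l ∈ Finset.univ.erase j, t l ^ d l)) = 0 :=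
    X_pow_dvd_iff.mp hdvd n hn
  simp only [map_sub, map_sum] at h0
  have h1 : ∀ j : Fin κ, PowerSeries.coeff n (((d j : ℕ) : PowerSeries R) * (s j - t j) *
        (t j ^ (d j - 1) * ∏ l ∈ Finset.univ.erase j, t l ^ d l))
      = PowerSeries.coeff n (((d j : ℕ) : PowerSeries R) * (s j - t j) *
        (t j ^ (d j - 1) * ∏ l ∈ Finset.univ.erase j, t l ^ d l)) := fun _ => rfl
  rw [show PowerSeries.coeff n (∏ j, s j ^ d j) - PowerSeries.coeff n (∏ j, t j ^ d j)
      - ∑ j, PowerSeries.coeff n (((d j : ℕ) : PowerSeries R) * (s j - t j) *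
          (t j ^ (d j - 1) * ∏ l ∈ Finset.univ.erase j, t l ^ d l)) = 0 from h0]
  rw [mul_zero]


end NewtonAux

open NewtonAux PowerSeries

/-- **Quadratic convergence of Newton's iteration for power series systems.**  With `H`
having zero constant coefficients and nilpotent Jacobian matrix at the origin, let `S` be the
solution with zero constant coefficients of `Y = H(z,Y)` and let `y` agree with `S` in all
degrees `n ≤ k`.  Then the matrix `Id - (∂H i/∂y j)(z, y)` of power series is invertible,
and the Newton iterate `y + (Id - ∂H/∂y (z,y))⁻¹ ⬝ (H(z,y) - y)` agrees with `S` in all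
degrees `n ≤ 2k + 1`. -/
theorem newton_iteration_quadratic {R : Type*} [CommRing R] {m : ℕ} (hm : 1 ≤ m)
    (H : Fin m → MvPowerSeries (Fin (m + 1)) R)
    (hH0 : ∀ i, MvPowerSeries.coeff 0 (H i) = 0)
    (hJ : IsNilpotent (Matrix.of fun i j : Fin m =>
      MvPowerSeries.coeff (Finsupp.single j.succ 1) (H i)))
    (S : Fin m → PowerSeries R)
    (hS0 : ∀ i, PowerSeries.constantCoeff (S i) = 0)
    (hSfix : ∀ i, S i = mvSubst (H i) (Fin.cons PowerSeries.X S))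
    (k : ℕ) (y : Fin m → PowerSeries R)
    (hy0 : ∀ i, PowerSeries.constantCoeff (y i) = 0)
    (hyS : ∀ i, ∀ n ≤ k, PowerSeries.coeff n (y i) = PowerSeries.coeff n (S i)) :
    IsUnit ((1 : Matrix (Fin m) (Fin m) (PowerSeries R)) -
        Matrix.of fun i j : Fin m => mvSubst (mvPderiv j.succ (H i)) (Fin.cons PowerSeries.X y)) ∧
      ∀ i, ∀ n ≤ 2 * k + 1,
        PowerSeries.coeff n
          ((y + (Ring.inverse ((1 : Matrix (Fin m) (Fin m) (PowerSeries R)) -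
              Matrix.of fun i j : Fin m =>
                mvSubst (mvPderiv j.succ (H i)) (Fin.cons PowerSeries.X y))).mulVec
            (fun i => mvSubst (H i) (Fin.cons PowerSeries.X y) - y i)) i) =
          PowerSeries.coeff n (S i) := by
  classical
  set t : Fin (m+1) → PowerSeries R := Fin.cons PowerSeries.X y with htdef
  set s : Fin (m+1) → PowerSeries R := Fin.cons PowerSeries.X S with hsdef
  set J : Matrix (Fin m) (Fin m) (PowerSeries R) :=
    Matrix.of fun i j : Fin m => mvSubst (mvPderiv j.succ (H i)) t with hJdef
  have ht0 : ∀ l, PowerSeries.constantCoeff (t l) = 0 := by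
    intro l
    refine Fin.cases ?_ ?_ l
    · simp [htdef]
    · intro i; simp [htdef, hy0 i]
  have hs0' : ∀ l, PowerSeries.constantCoeff (s l) = 0 := by
    intro l
    refine Fin.cases ?_ ?_ l
    · simp [hsdef]
    · intro i; simp [hsdef, hS0 i]
  have hentry : ∀ (i j : Fin m), PowerSeries.constantCoeff (J i j)
      = MvPowerSeries.coeff (Finsupp.single j.succ 1) (H i) := by
    intro i j
    have h1 : J i j = mvSubst (mvPderiv j.succ (H i)) t := rfl
    rw [h1, constantCoeff_mvSubst]
    have h2 : MvPowerSeries.coeff 0 (mvPderiv j.succ (H i))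
        = (((0 : Fin (m+1) →₀ ℕ) j.succ + 1 : ℕ) : R) *
          MvPowerSeries.coeff (0 + Finsupp.single j.succ 1) (H i) := rfl
    rw [h2]
    simp
  have hMunit : IsUnit ((1 : Matrix (Fin m) (Fin m) (PowerSeries R)) - J) := by
    rw [Matrix.isUnit_iff_isUnit_det, PowerSeries.isUnit_iff_constantCoeff]
    have hmap : (PowerSeries.constantCoeff) ((1 - J).det)
        = ((1 : Matrix (Fin m) (Fin m) R) - Matrix.of fun i j : Fin m =>
            MvPowerSeries.coeff (Finsupp.single j.succ 1) (H i)).det := by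
      rw [RingHom.map_det]
      congr 1
      ext i j
      simp [RingHom.mapMatrix_apply, Matrix.map_apply, Matrix.sub_apply,
        Matrix.one_apply, apply_ite, hentry i j]
    rw [hmap, ← Matrix.isUnit_iff_isUnit_det]
    exact hJ.isUnit_one_sub
  refine ⟨hMunit, ?_⟩
  set u := Ring.inverse ((1 : Matrix (Fin m) (Fin m) (PowerSeries R)) - J) with hudef
  have huM : u * (1 - J) = 1 := Ring.inverse_mul_cancel _ hMunit
  set v : Fin m → PowerSeries R := fun i => S i - y i with hv
  set b : Fin m → PowerSeries R := fun i => mvSubst (H i) t - y i with hb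
  have hst : ∀ j : Fin (m+1), (X : PowerSeries R) ^ (k+1) ∣ s j - t j := by
    intro j
    refine Fin.cases ?_ ?_ j
    · simp [hsdef, htdef]
    · intro i
      rw [PowerSeries.X_pow_dvd_iff]
      intro p hp
      simp only [hsdef, htdef, Fin.cons_succ, map_sub]
      rw [hyS i p (Nat.lt_succ_iff.mp hp), sub_self]
  have hw : ∀ i', (X : PowerSeries R) ^ (2*(k+1)) ∣ ((1 - J).mulVec v - b) i' := by
    intro i'
    have htay := taylor_main (H i') s t hs0' ht0 hst
    have heq : ((1 - J).mulVec v - b) i' = mvSubst (H i') s - mvSubst (H i') t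
        - ∑ j, mvSubst (mvPderiv j (H i')) t * (s j - t j) := by
      have hJv : (J.mulVec v) i' = ∑ j, mvSubst (mvPderiv j.succ (H i')) t * (S j - y j) := by
        simp [Matrix.mulVec, dotProduct, hJdef, hv]
      have h00 : s 0 - t 0 = 0 := by simp [hsdef, htdef]
      rw [Fin.sum_univ_succ, h00, mul_zero, zero_add]
      have hS' : mvSubst (H i') s = S i' := (hSfix i').symm
      simp only [Pi.sub_apply, Matrix.sub_mulVec, Matrix.one_mulVec, hJv, hS']
      have hsc : ∀ j : Fin m, s j.succ = S j := fun j => rfl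
      have htc : ∀ j : Fin m, t j.succ = y j := fun j => rfl
      simp only [hsc, htc, hb, hv]
      ring
    rw [heq]
    exact htay
  intro i n hn
  have hSn : S i - (y + u.mulVec b) i = (u.mulVec ((1 - J).mulVec v - b)) i := by
    have h1 : u.mulVec ((1 - J).mulVec v) = v := by
      rw [Matrix.mulVec_mulVec, huM, Matrix.one_mulVec]
    calc S i - (y + u.mulVec b) i = v i - (u.mulVec b) i := by
          simp only [Pi.add_apply, hv]; ring
      _ = (u.mulVec ((1 - J).mulVec v)) i - (u.mulVec b) i := by rw [h1]
      _ = (u.mulVec ((1 - J).mulVec v - b)) i := by rw [Matrix.mulVec_sub]; simp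
  have hdvd : (X : PowerSeries R) ^ (2*(k+1)) ∣ S i - (y + u.mulVec b) i := by
    rw [hSn]
    simp only [Matrix.mulVec, dotProduct]
    exact Finset.dvd_sum fun j _ => (hw j).mul_left _
  have hc := PowerSeries.X_pow_dvd_iff.mp hdvd n (by omega)
  rw [map_sub] at hc
  exact (sub_eq_zero.mp hc).symm
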